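/- Let 0 < α < 1 and β > 0. For every λ > 0 and every positive even solution u of u'' + λ h(x,α)e^u = 0, u(-1)=u(1)=0, with ‖u‖_∞ = β, one necessarily has λ = Λ(β) and u = U(·;β), where Λ(β) = (1-α)^{-2} e^{-β} η(β)², η(β) = √2·arctanh(√(1-e^{-β})), and U(x;β) = β for |x|<α, U(x;β) = w(η(β)(|x|-α)/(1-α)) + β for α ≤ |x| ≤ 1 with w(x) = log(1-tanh²(x/√2)). -/

import Mathlib

open Set

noncomputable def w (x : ℝ) : ℝ := Real.log (1 - Real.tanh (x / Real.sqrt 2) ^ 2)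

noncomputable def artanh (x : ℝ) : ℝ := (1 / 2) * Real.log ((1 + x) / (1 - x))

noncomputable def eta (β : ℝ) : ℝ := Real.sqrt 2 * artanh (Real.sqrt (1 - Real.exp (-β)))

noncomputable def Lam (α β : ℝ) : ℝ := (1 - α) ^ (-2 : ℤ) * Real.exp (-β) * (eta β) ^ 2

noncomputable def step (α x : ℝ) : ℝ := if |x| < α then 0 else 1

noncomputable def U (α β x : ℝ) : ℝ :=
  if |x| < α then β else w (eta β * (|x| - α) / (1 - α)) + β

def IsSolution (α lam : ℝ) (u : ℝ → ℝ) : Prop :=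
  ContinuousOn u (Icc (-1) 1) ∧
  (∀ x ∈ Ioo (-1 : ℝ) 1, DifferentiableAt ℝ u x) ∧
  ContinuousOn (deriv u) (Icc (-1) 1) ∧
  (∀ x ∈ Ioo (-1 : ℝ) 1 \ {-α, α}, DifferentiableAt ℝ (deriv u) x ∧
    deriv (deriv u) x + lam * step α x * Real.exp (u x) = 0) ∧
  u (-1) = 0 ∧ u 1 = 0

set_option linter.unusedVariables false in


noncomputable def wd (x : ℝ) : ℝ := -Real.sqrt 2 * Real.tanh (x / Real.sqrt 2)

lemma one_sub_tanh_sq (x : ℝ) : 1 - Real.tanh x ^ 2 = 1 / Real.cosh x ^ 2 := by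
  have h := Real.cosh_sq_sub_sinh_sq x
  have hc := Real.cosh_pos x
  rw [Real.tanh_eq_sinh_div_cosh]
  field_simp
  linarith [h]

lemma one_sub_tanh_sq_pos (x : ℝ) : 0 < 1 - Real.tanh x ^ 2 := by
  rw [one_sub_tanh_sq]
  positivity

lemma hasDerivAt_tanh (x : ℝ) : HasDerivAt Real.tanh (1 / Real.cosh x ^ 2) x := by
  have h := (Real.hasDerivAt_sinh x).div (Real.hasDerivAt_cosh x) (Real.cosh_pos x).ne'
  have : Real.tanh = fun x => Real.sinh x / Real.cosh x := by
    funext y; exact Real.tanh_eq_sinh_div_cosh y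
  rw [this]
  refine h.congr_deriv ?_
  have := Real.cosh_sq_sub_sinh_sq x
  congr 1
  nlinarith [Real.cosh_pos x]

lemma sqrt_two_pos : (0:ℝ) < Real.sqrt 2 := by positivity

lemma w_hasDerivAt (x : ℝ) : HasDerivAt w (wd x) x := by
  have h1 : HasDerivAt (fun x : ℝ => x / Real.sqrt 2) (1 / Real.sqrt 2) x := by
    simpa using (hasDerivAt_id x).div_const (Real.sqrt 2)
  have h2 : HasDerivAt (fun x : ℝ => Real.tanh (x / Real.sqrt 2))
      ((1 / Real.cosh (x / Real.sqrt 2) ^ 2) * (1 / Real.sqrt 2)) x :=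
    by have := (hasDerivAt_tanh (x / Real.sqrt 2)).comp x h1; exact this
  have h3 : HasDerivAt (fun x : ℝ => 1 - Real.tanh (x / Real.sqrt 2) ^ 2)
      (-(2 * Real.tanh (x / Real.sqrt 2) * ((1 / Real.cosh (x / Real.sqrt 2) ^ 2) * (1 / Real.sqrt 2)))) x := by
    have := ((h2.pow 2).const_sub 1)
    simpa [mul_comm, mul_assoc, mul_left_comm] using this
  have h4 := (Real.hasDerivAt_log (one_sub_tanh_sq_pos (x / Real.sqrt 2)).ne').comp x h3
  refine h4.congr_deriv ?_
  rw [one_sub_tanh_sq]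
  have hc := (Real.cosh_pos (x / Real.sqrt 2)).ne'
  have hs : (Real.sqrt 2) ≠ 0 := sqrt_two_pos.ne'
  have h2' : Real.sqrt 2 * Real.sqrt 2 = 2 := Real.mul_self_sqrt (by norm_num)
  rw [wd]
  field_simp
  linear_combination (Real.tanh (x/Real.sqrt 2)) * h2'

lemma exp_w (x : ℝ) : Real.exp (w x) = 1 - Real.tanh (x / Real.sqrt 2) ^ 2 :=
  Real.exp_log (one_sub_tanh_sq_pos _)

lemma w_zero : w 0 = 0 := by simp [w]

lemma wd_zero : wd 0 = 0 := by simp [wd]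

lemma w_nonpos (x : ℝ) : w x ≤ 0 := by
  apply Real.log_nonpos
  · exact (one_sub_tanh_sq_pos _).le
  · nlinarith [sq_nonneg (Real.tanh (x / Real.sqrt 2))]

lemma wd_hasDerivAt (x : ℝ) : HasDerivAt wd (-(Real.exp (w x))) x := by
  have h1 : HasDerivAt (fun x : ℝ => x / Real.sqrt 2) (1 / Real.sqrt 2) x := by
    simpa using (hasDerivAt_id x).div_const (Real.sqrt 2)
  have h2 : HasDerivAt (fun x : ℝ => Real.tanh (x / Real.sqrt 2))
      ((1 / Real.cosh (x / Real.sqrt 2) ^ 2) * (1 / Real.sqrt 2)) x :=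
    by have := (hasDerivAt_tanh (x / Real.sqrt 2)).comp x h1; exact this
  have h3 := h2.const_mul (-Real.sqrt 2)
  have : wd = fun x => -Real.sqrt 2 * Real.tanh (x / Real.sqrt 2) := rfl
  rw [this]
  refine h3.congr_deriv ?_
  rw [exp_w, one_sub_tanh_sq]
  have h2' : Real.sqrt 2 * Real.sqrt 2 = 2 := Real.mul_self_sqrt (by norm_num)
  have hc := (Real.cosh_pos (x / Real.sqrt 2)).ne'
  have hs : (Real.sqrt 2) ≠ 0 := sqrt_two_pos.ne'
  field_simp


lemma tanh_eq_exp (z : ℝ) : Real.tanh z = (Real.exp (2*z) - 1) / (Real.exp (2*z) + 1) := by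
  rw [Real.tanh_eq_sinh_div_cosh, Real.sinh_eq, Real.cosh_eq]
  have h1 : Real.exp (2*z) = Real.exp z * Real.exp z := by
    rw [← Real.exp_add]; ring_nf
  have h2 : Real.exp (-z) = 1 / Real.exp z := by
    rw [Real.exp_neg]; exact inv_eq_one_div _
  have h3 := (Real.exp_pos z).ne'
  have h4 : Real.exp z * Real.exp z + 1 > 0 := by positivity
  rw [h1, h2]
  rw [div_eq_div_iff (by positivity) (by positivity)]
  field_simp

lemma eq_artanh {z y : ℝ} (hy1 : y < 1) (h : Real.tanh z = y) : z = artanh y := by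
  rw [tanh_eq_exp] at h
  set E := Real.exp (2*z) with hE
  have hEpos : 0 < E := Real.exp_pos _
  have h1 : E - 1 = y * (E + 1) := by
    field_simp at h
    linarith [h]
  have h2 : E * (1 - y) = 1 + y := by ring_nf; linarith [h1]
  have h1y : (0:ℝ) < 1 - y := by linarith
  have hEeq : E = (1 + y) / (1 - y) := by
    field_simp
    linarith [h2]
  have := congrArg Real.log hEeq
  rw [hE, Real.log_exp] at this
  rw [artanh, ← this]
  ring

lemma exp_lip {β a b : ℝ} (ha : a ≤ β) (hb : b ≤ β) :
    |Real.exp a - Real.exp b| ≤ Real.exp β * |a - b| := by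
  wlog h : b ≤ a generalizing a b
  · rw [abs_sub_comm, abs_sub_comm a b]; exact this hb ha (by linarith)
  have h1 : Real.exp a - Real.exp b ≤ Real.exp β * (a - b) := by
    have h2 : Real.exp (-(a-b)) ≥ 1 - (a-b) := by
      have := Real.add_one_le_exp (-(a-b)); linarith
    have h3 : Real.exp a - Real.exp b = Real.exp a * (1 - Real.exp (-(a-b))) := by
      rw [mul_sub, mul_one, ← Real.exp_add]; ring_nf
    have h4 : Real.exp a * (1 - Real.exp (-(a-b))) ≤ Real.exp a * (a-b) := by
      apply mul_le_mul_of_nonneg_left (by linarith) (Real.exp_pos a).le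
    have h5 : Real.exp a * (a-b) ≤ Real.exp β * (a-b) := by
      apply mul_le_mul_of_nonneg_right (Real.exp_le_exp.mpr ha) (by linarith)
    linarith
  have hge : 0 ≤ Real.exp a - Real.exp b := by
    have := Real.exp_le_exp.mpr h; linarith
  rw [abs_of_nonneg hge, abs_of_nonneg (by linarith : (0:ℝ) ≤ a - b)]
  exact h1

lemma ode_uniq (lam β A B : ℝ) (hlam : 0 < lam) (hAB : A < B)
    (p q g gd : ℝ → ℝ)
    (hpc : ContinuousOn p (Icc A B)) (hqc : ContinuousOn q (Icc A B))
    (hder : ∀ x ∈ Ioo A B, HasDerivAt p (q x) x)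
    (hder2 : ∀ x ∈ Ioo A B, HasDerivAt q (-(lam * Real.exp (p x))) x)
    (hple : ∀ x ∈ Icc A B, p x ≤ β)
    (hg : ∀ x, HasDerivAt g (gd x) x)
    (hgd : ∀ x, HasDerivAt gd (-(lam * Real.exp (g x))) x)
    (hgle : ∀ x ∈ Icc A B, g x ≤ β)
    (hpA : p A = g A) (hqA : q A = gd A) :
    ∀ x ∈ Icc A B, p x = g x := by
  have hKnn : (0:ℝ) ≤ max 1 (lam * Real.exp β) := le_trans zero_le_one (le_max_left _ _)
  set K : NNReal := (max 1 (lam * Real.exp β)).toNNReal with hK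
  have hKc : (K : ℝ) = max 1 (lam * Real.exp β) := Real.coe_toNNReal _ hKnn
  set v : ℝ → ℝ × ℝ → ℝ × ℝ := fun _ z => (z.2, -(lam * Real.exp z.1)) with hv
  set S : ℝ → Set (ℝ × ℝ) := fun _ => {z : ℝ × ℝ | z.1 ≤ β} with hS
  have hlip : ∀ t, LipschitzOnWith K (v t) (S t) := by
    intro t
    apply LipschitzOnWith.of_dist_le_mul
    intro z hz z' hz'
    have hz1 : z.1 ≤ β := hz
    have hz1' : z'.1 ≤ β := hz'
    rw [Prod.dist_eq, Prod.dist_eq]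
    simp only [hv, Real.dist_eq]
    apply max_le
    · calc |z.2 - z'.2| ≤ max |z.1 - z'.1| |z.2 - z'.2| := le_max_right _ _
        _ ≤ (K:ℝ) * max |z.1 - z'.1| |z.2 - z'.2| := by
            nlinarith [le_max_left (1:ℝ) (lam * Real.exp β), hKc.ge, hKc.le,
              abs_nonneg (z.1 - z'.1), abs_nonneg (z.2 - z'.2),
              le_max_right |z.1 - z'.1| |z.2 - z'.2|]
    · have h2 := abs_le.mp (exp_lip hz1 hz1')
      have hK2 : lam * Real.exp β ≤ (K:ℝ) := by rw [hKc]; exact le_max_right _ _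
      have hm1 : |z.1 - z'.1| ≤ max |z.1 - z'.1| |z.2 - z'.2| := le_max_left _ _
      have hm0 : (0:ℝ) ≤ |z.1 - z'.1| := abs_nonneg _
      have hprod : lam * Real.exp β * |z.1 - z'.1| ≤ (K:ℝ) * max |z.1 - z'.1| |z.2 - z'.2| :=
        mul_le_mul hK2 hm1 hm0 (NNReal.coe_nonneg K)
      rw [abs_le]
      constructor <;> nlinarith [h2.1, h2.2, hlam.le, hprod,
        mul_le_mul_of_nonneg_left h2.2 hlam.le,
        mul_le_mul_of_nonneg_left h2.1 hlam.le]
  set F : ℝ → ℝ × ℝ := fun x => (p x, q x) with hF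
  set G : ℝ → ℝ × ℝ := fun x => (g x, gd x) with hG
  have hGcont : ∀ y, ContinuousAt G y := fun y =>
    ((hg y).continuousAt).prodMk ((hgd y).continuousAt)
  intro t ht
  rcases eq_or_lt_of_le ht.1 with h | hAt
  · rw [← h]; exact hpA
  · have key : ∀ a ∈ Ioo A t, dist (F t) (G t) ≤ dist (F a) (G a) * Real.exp (K * (t - a)) := by
      intro a ha
      have hsub : Icc a t ⊆ Icc A B := Icc_subset_Icc ha.1.le ht.2
      have hsub2 : Ico a t ⊆ Ioo A B := fun y hy => ⟨lt_of_lt_of_le ha.1 hy.1, lt_of_lt_of_le hy.2 ht.2⟩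
      have hsub2' : Ico a t ⊆ Icc A B := fun y hy => Ioo_subset_Icc_self (hsub2 hy)
      have := dist_le_of_trajectories_ODE_of_mem (v := v) (s := S) (K := K) (fun t _ => hlip t)
        (f := F) (g := G) (a := a) (b := t)
        ((hpc.mono hsub).prodMk (hqc.mono hsub))
        (fun y hy => ((hder y (hsub2 hy)).prodMk (hder2 y (hsub2 hy))).hasDerivWithinAt)
        (fun y hy => hple y (hsub2' hy))
        (continuousOn_of_forall_continuousAt (fun y _ => hGcont y))
        (fun y hy => ((hg y).prodMk (hgd y)).hasDerivWithinAt)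
        (fun y hy => hgle y (hsub2' hy))
        le_rfl
      exact this t ⟨ha.2.le, le_rfl⟩
    have hmem : Ioo A t ∈ nhdsWithin A (Ioi A) := Ioo_mem_nhdsGT_of_mem ⟨le_refl A, hAt⟩
    have hFA : F A = G A := by simp only [hF, hG, hpA, hqA]
    have hFcont : Filter.Tendsto F (nhdsWithin A (Ioo A t)) (nhds (F A)) := by
      have : ContinuousWithinAt F (Icc A B) A :=
        ((hpc.prodMk hqc)) A ⟨le_refl A, le_of_lt (lt_of_lt_of_le hAt ht.2)⟩
      exact (this.mono (fun y hy => ⟨hy.1.le, le_trans hy.2.le ht.2⟩)).tendsto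
    have hGcont' : Filter.Tendsto G (nhdsWithin A (Ioo A t)) (nhds (G A)) :=
      ((hGcont A).continuousWithinAt).tendsto
    have hdtend : Filter.Tendsto (fun a => dist (F a) (G a) * Real.exp (K * (t - a)))
        (nhdsWithin A (Ioo A t)) (nhds (dist (F A) (G A) * Real.exp (K * (t - A)))) := by
      apply Filter.Tendsto.mul (hFcont.dist hGcont')
      have hc : Continuous (fun a : ℝ => Real.exp ((K:ℝ) * (t - a))) :=
        Real.continuous_exp.comp (continuous_const.mul (continuous_const.sub continuous_id))
      exact hc.continuousWithinAt.tendsto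
    rw [hFA, dist_self, zero_mul] at hdtend
    have hne : (nhdsWithin A (Ioo A t)).NeBot := by
      rw [← mem_closure_iff_nhdsWithin_neBot, closure_Ioo hAt.ne]
      exact ⟨le_refl A, hAt.le⟩
    have hle : dist (F t) (G t) ≤ 0 := by
      apply ge_of_tendsto hdtend
      filter_upwards [self_mem_nhdsWithin] with a ha using key a ha
    have : F t = G t := by
      have := dist_le_zero.mp hle
      exact this
    exact congrArg Prod.fst this

noncomputable def gsol (k α β x : ℝ) : ℝ := w (k*(x-α)) + β
noncomputable def gder (k α x : ℝ) : ℝ := k * wd (k*(x-α))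

lemma inner_hasDerivAt (k α x : ℝ) : HasDerivAt (fun x : ℝ => k*(x-α)) k x := by
  simpa using ((hasDerivAt_id x).sub_const α).const_mul k

lemma gsol_hasDerivAt (k α β x : ℝ) : HasDerivAt (gsol k α β) (gder k α x) x := by
  have h := ((w_hasDerivAt (k*(x-α))).comp x (inner_hasDerivAt k α x)).add_const β
  have he : gsol k α β = fun x => w (k*(x-α)) + β := rfl
  rw [he, gder]
  refine h.congr_deriv ?_
  ring

lemma gder_hasDerivAt (k α β lam x : ℝ) (hk : k^2 = lam * Real.exp β) :
    HasDerivAt (gder k α) (-(lam * Real.exp (gsol k α β x))) x := by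
  have h := ((wd_hasDerivAt (k*(x-α))).comp x (inner_hasDerivAt k α x)).const_mul k
  have he : gder k α = fun x => k * wd (k*(x-α)) := rfl
  rw [he]
  refine h.congr_deriv ?_
  rw [gsol, Real.exp_add]
  linear_combination (-Real.exp (w (k*(x-α)))) * hk

lemma gsol_le (k α β x : ℝ) : gsol k α β x ≤ β := by
  have := w_nonpos (k*(x-α)); rw [gsol]; linarith

lemma eq_of_limit {f : ℝ → ℝ} {s : Set ℝ} {A c : ℝ} (h1 : ContinuousWithinAt f s A)
    (h2 : ∀ x ∈ s, f x = c) (h3 : A ∈ closure s) : f A = c := by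
  have hne : (nhdsWithin A s).NeBot := mem_closure_iff_nhdsWithin_neBot.mp h3
  have t1 : Filter.Tendsto f (nhdsWithin A s) (nhds (f A)) := h1.tendsto
  have t2 : Filter.Tendsto f (nhdsWithin A s) (nhds c) := by
    apply Filter.Tendsto.congr' _ tendsto_const_nhds
    filter_upwards [self_mem_nhdsWithin] with x hx using (h2 x hx).symm
  exact tendsto_nhds_unique t1 t2

theorem stmt_16 (α β lam : ℝ) (hα : 0 < α ∧ α < 1) (hβ : 0 < β) (hlam : 0 < lam)
    (u : ℝ → ℝ) (hsol : IsSolution α lam u)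
    (hpos : ∀ x ∈ Ioo (-1 : ℝ) 1, 0 < u x)
    (heven : ∀ x : ℝ, u (-x) = u x)
    (hnorm : IsGreatest ((fun x => |u x|) '' Icc (-1 : ℝ) 1) β) :
    lam = Lam α β ∧ ∀ x ∈ Icc (-1 : ℝ) 1, u x = U α β x := by
  obtain ⟨hα0, hα1⟩ := hα
  obtain ⟨hu_cont, hu_diff, hq_cont, hu_ode, hu_m1, hu_p1⟩ := hsol
  set q := deriv u with hqdef
  have hu_deriv : ∀ y ∈ Ioo (-1:ℝ) 1, HasDerivAt u (q y) y :=
    fun y hy => (hu_diff y hy).hasDerivAt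
  have hαmem : α ∈ Icc (-1:ℝ) 1 := ⟨by linarith, by linarith⟩
  have h0mem : (0:ℝ) ∈ Icc (-1:ℝ) 1 := ⟨by norm_num, by norm_num⟩
  -- q 0 = 0
  have hq0 : q 0 = 0 := by
    have h := deriv_comp_neg (f := u) (x := (0:ℝ))
    have he : (fun x => u (-x)) = u := funext heven
    rw [he, neg_zero] at h
    have : q 0 = - q 0 := h
    linarith
  -- middle ODE
  have hmid_ode : ∀ y ∈ Ioo (-α) α, DifferentiableAt ℝ q y ∧ deriv q y = 0 := by
    intro y hy
    have hy1 : |y| < α := abs_lt.mpr ⟨hy.1, hy.2⟩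
    have hmem : y ∈ Ioo (-1:ℝ) 1 \ {-α, α} := by
      refine ⟨⟨by linarith [hy.1], by linarith [hy.2]⟩, ?_⟩
      simp only [mem_insert_iff, mem_singleton_iff, not_or]
      exact ⟨fun h => by rw [h] at hy; exact absurd hy.1 (lt_irrefl _),
             fun h => by rw [h] at hy; exact absurd hy.2 (lt_irrefl _)⟩
    obtain ⟨hd, heq⟩ := hu_ode y hmem
    refine ⟨hd, ?_⟩
    have hstep : step α y = 0 := by simp [step, hy1]
    rw [hstep] at heq; linarith
  -- q = 0 on middle
  have hq_mid : ∀ y ∈ Ioo (-α) α, q y = 0 := by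
    intro y hy
    rcases le_or_gt 0 y with h0 | h0
    · have hc := constant_of_has_deriv_right_zero (f := q) (a := 0) (b := y)
        (hq_cont.mono (Icc_subset_Icc (by norm_num) (by linarith [hy.2])))
        (fun z hz => by
          have hz' : z ∈ Ioo (-α) α := ⟨by linarith [hz.1], by linarith [hz.2, hy.2]⟩
          obtain ⟨hd, hz0⟩ := hmid_ode z hz'
          exact (hz0 ▸ hd.hasDerivAt).hasDerivWithinAt)
      have := hc y ⟨h0, le_refl y⟩
      rw [this, hq0]
    · have hc := constant_of_has_deriv_right_zero (f := q) (a := y) (b := 0)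
        (hq_cont.mono (Icc_subset_Icc (by linarith [hy.1]) (by norm_num)))
        (fun z hz => by
          have hz' : z ∈ Ioo (-α) α := ⟨by linarith [hz.1, hy.1], by linarith [hz.2]⟩
          obtain ⟨hd, hz0⟩ := hmid_ode z hz'
          exact (hz0 ▸ hd.hasDerivAt).hasDerivWithinAt)
      have h := hc 0 ⟨h0.le, le_refl 0⟩
      rw [hq0] at h
      exact h.symm
  -- u = u 0 on middle
  have hu_midc : ∀ y ∈ Ioo (-α) α, u y = u 0 := by
    intro y hy
    rcases le_or_gt 0 y with h0 | h0
    · have hc := constant_of_has_deriv_right_zero (f := u) (a := 0) (b := y)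
        (hu_cont.mono (Icc_subset_Icc (by norm_num) (by linarith [hy.2])))
        (fun z hz => by
          have hz' : z ∈ Ioo (-α) α := ⟨by linarith [hz.1], by linarith [hz.2, hy.2]⟩
          have hz'' : z ∈ Ioo (-1:ℝ) 1 := ⟨by linarith [hz'.1], by linarith [hz'.2]⟩
          exact ((hq_mid z hz') ▸ hu_deriv z hz'').hasDerivWithinAt)
      exact hc y ⟨h0, le_refl y⟩
    · have hc := constant_of_has_deriv_right_zero (f := u) (a := y) (b := 0)
        (hu_cont.mono (Icc_subset_Icc (by linarith [hy.1]) (by norm_num)))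
        (fun z hz => by
          have hz' : z ∈ Ioo (-α) α := ⟨by linarith [hz.1, hy.1], by linarith [hz.2]⟩
          have hz'' : z ∈ Ioo (-1:ℝ) 1 := ⟨by linarith [hz'.1], by linarith [hz'.2]⟩
          exact ((hq_mid z hz') ▸ hu_deriv z hz'').hasDerivWithinAt)
      exact (hc 0 ⟨h0.le, le_refl 0⟩).symm
  -- limits at α
  have hIooSub : Ioo (0:ℝ) α ⊆ Icc (-1:ℝ) 1 :=
    fun y hy => ⟨by linarith [hy.1], by linarith [hy.2]⟩
  have hclos : α ∈ closure (Ioo (0:ℝ) α) := by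
    rw [closure_Ioo hα0.ne]; exact ⟨hα0.le, le_refl α⟩
  have hqα : q α = 0 :=
    eq_of_limit ((hq_cont α hαmem).mono hIooSub)
      (fun y hy => hq_mid y ⟨by linarith [hy.1], hy.2⟩) hclos
  have huα : u α = u 0 :=
    eq_of_limit ((hu_cont α hαmem).mono hIooSub)
      (fun y hy => hu_midc y ⟨by linarith [hy.1], hy.2⟩) hclos
  -- right ODE
  have hright_ode : ∀ y ∈ Ioo α 1, HasDerivAt q (-(lam * Real.exp (u y))) y := by
    intro y hy
    have hy0 : 0 < y := lt_trans hα0 hy.1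
    have hmem : y ∈ Ioo (-1:ℝ) 1 \ {-α, α} := by
      refine ⟨⟨by linarith, hy.2⟩, ?_⟩
      simp only [mem_insert_iff, mem_singleton_iff, not_or]
      constructor <;> intro h <;> [linarith [hy.1]; exact absurd h.symm (ne_of_lt hy.1)]
    obtain ⟨hd, heq⟩ := hu_ode y hmem
    have hstep : step α y = 1 := by
      have : ¬ |y| < α := by rw [abs_of_pos hy0]; linarith [hy.1]
      simp [step, this]
    rw [hstep] at heq
    have : deriv q y = -(lam * Real.exp (u y)) := by rw [hqdef] at heq ⊢; linarith
    exact this ▸ hd.hasDerivAt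
  -- energy
  set Ef : ℝ → ℝ := fun x => q x ^ 2 / 2 + lam * Real.exp (u x) with hEfdef
  have hEf_cont : ContinuousOn Ef (Icc (-1:ℝ) 1) := by
    apply ContinuousOn.add
    · exact (hq_cont.pow 2).div_const 2
    · exact continuousOn_const.mul (Real.continuous_exp.comp_continuousOn hu_cont)
  have hEfc : ∀ a ∈ Ioo α 1, ∀ x ∈ Icc a 1, Ef x = Ef a := by
    intro a ha
    apply constant_of_has_deriv_right_zero
      (hEf_cont.mono (Icc_subset_Icc (by linarith [ha.1]) (by norm_num)))
    intro z hz
    have hz' : z ∈ Ioo α 1 := ⟨lt_of_lt_of_le ha.1 hz.1, hz.2⟩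
    have hz'' : z ∈ Ioo (-1:ℝ) 1 := ⟨by linarith [hz'.1], hz'.2⟩
    have h1 : HasDerivAt (fun x => q x ^ 2 / 2)
        (2 * q z ^ 1 * (-(lam * Real.exp (u z))) / 2) z :=
      ((hright_ode z hz').pow 2).div_const 2
    have h2 : HasDerivAt (fun x => lam * Real.exp (u x))
        (lam * (Real.exp (u z) * q z)) z :=
      (((hu_deriv z hz'').exp)).const_mul lam
    have h3 := h1.add h2
    have : 2 * q z ^ 1 * (-(lam * Real.exp (u z))) / 2 + lam * (Real.exp (u z) * q z) = 0 := by
      ring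
    rw [this] at h3
    exact h3.hasDerivWithinAt
  have hEall : ∀ x ∈ Icc α 1, Ef x = lam * Real.exp (u 0) := by
    have hEfα : Ef α = lam * Real.exp (u 0) := by
      rw [hEfdef]; simp only; rw [hqα, huα]; ring
    have hE1 : ∀ x ∈ Ioc α 1, Ef x = Ef 1 := by
      intro x hx
      rcases eq_or_lt_of_le hx.2 with h | h
      · rw [h]
      · exact ((hEfc x ⟨hx.1, h⟩) 1 ⟨h.le, le_refl 1⟩).symm
    have hclos2 : α ∈ closure (Ioo α 1) := by
      rw [closure_Ioo (ne_of_lt hα1)]; exact ⟨le_refl α, hα1.le⟩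
    have hEfα1 : Ef α = Ef 1 :=
      eq_of_limit ((hEf_cont α hαmem).mono
        (fun y hy => ⟨by linarith [hy.1], hy.2.le⟩))
        (fun y hy => hE1 y ⟨hy.1, hy.2.le⟩) hclos2
    intro x hx
    rcases eq_or_lt_of_le hx.1 with h | h
    · rw [← h, hEfα]
    · rw [hE1 x ⟨h, hx.2⟩, ← hEfα1, hEfα]
  -- u ≤ u 0 on [α,1]
  have hule : ∀ x ∈ Icc α 1, u x ≤ u 0 := by
    intro x hx
    have h := hEall x hx
    have h2 : lam * Real.exp (u x) ≤ lam * Real.exp (u 0) := by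
      rw [hEfdef] at h; simp only at h
      nlinarith [sq_nonneg (q x)]
    have := (mul_le_mul_iff_right₀ hlam).mp h2
    exact Real.exp_le_exp.mp this
  -- u 0 = β
  have hu0 : u 0 = β := by
    have hub : u 0 ≤ β := le_trans (le_abs_self _) (hnorm.2 ⟨0, h0mem, rfl⟩)
    obtain ⟨x0, hx0, hx0e'⟩ := hnorm.1
    have hx0e : |u x0| = β := hx0e'
    have hmax : ∀ x ∈ Icc (-1:ℝ) 1, u x ≤ u 0 := by
      intro x hx
      have hux : u x = u |x| := by
        rcases le_or_gt 0 x with h | h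
        · rw [abs_of_nonneg h]
        · rw [abs_of_neg h]; exact (heven x).symm
      rw [hux]
      have habs1 : |x| ≤ 1 := abs_le.mpr ⟨hx.1, hx.2⟩
      rcases lt_or_ge |x| α with h | h
      · rcases eq_or_lt_of_le (abs_nonneg x) with h0 | h0
        · rw [← h0]
        · exact le_of_eq (hu_midc |x| ⟨by linarith, h⟩)
      · exact hule |x| ⟨h, habs1⟩
    have hβle : β ≤ u 0 := by
      rcases eq_or_lt_of_le hx0.2 with h1 | h1
      · exfalso; rw [h1, hu_p1] at hx0e; simp at hx0e; linarith
      rcases eq_or_lt_of_le hx0.1 with h2 | h2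
      · exfalso; rw [← h2, hu_m1] at hx0e; simp at hx0e; linarith
      · have hp := hpos x0 ⟨h2, h1⟩
        rw [← hx0e, abs_of_pos hp]
        exact hmax x0 hx0
    linarith
  rw [hu0] at hule huα
  -- the explicit solution
  set k := Real.sqrt (lam * Real.exp β) with hkdef
  have hkpos : 0 < k := Real.sqrt_pos.mpr (by positivity)
  have hk2 : k ^ 2 = lam * Real.exp β := Real.sq_sqrt (by positivity)
  have huni : ∀ x ∈ Icc α 1, u x = gsol k α β x := by
    apply ode_uniq lam β α 1 hlam hα1 u q _ _
      (hu_cont.mono (Icc_subset_Icc (by linarith) (le_refl 1)))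
      (hq_cont.mono (Icc_subset_Icc (by linarith) (le_refl 1)))
      (fun y hy => hu_deriv y ⟨by linarith [hy.1], hy.2⟩)
      hright_ode hule
      (gsol_hasDerivAt k α β)
      (fun x => gder_hasDerivAt k α β lam x hk2)
      (fun x _ => gsol_le k α β x)
    · rw [huα, gsol]; simp [w_zero]
    · rw [hqα, gder]; simp [wd_zero]
  -- boundary condition gives k(1-α) = eta β
  have h1a : (1:ℝ) - α ≠ 0 := by linarith
  have hw1 : w (k * (1 - α)) = -β := by
    have := huni 1 ⟨hα1.le, le_refl 1⟩
    rw [hu_p1, gsol] at this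
    linarith [this]
  set y := Real.sqrt (1 - Real.exp (-β)) with hydef
  have hexpβ : Real.exp (-β) < 1 := by
    rw [show (1:ℝ) = Real.exp 0 by simp]
    exact Real.exp_lt_exp.mpr (by linarith)
  have hy0 : 0 ≤ y := Real.sqrt_nonneg _
  have hysq : y ^ 2 = 1 - Real.exp (-β) := Real.sq_sqrt (by linarith)
  have hylt : y < 1 := by nlinarith [Real.exp_pos (-β)]
  set z := k * (1 - α) / Real.sqrt 2 with hzdef
  have htanhsq : Real.tanh z ^ 2 = 1 - Real.exp (-β) := by
    have h := congrArg Real.exp hw1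
    rw [exp_w] at h
    rw [hzdef]
    linarith [h]
  have htanh0 : 0 ≤ Real.tanh z := by
    have hz0 : 0 ≤ z := by
      rw [hzdef]
      have h1α : (0:ℝ) < 1 - α := by linarith
      positivity
    rw [tanh_eq_exp]
    have h1 : (1:ℝ) ≤ Real.exp (2*z) := by
      rw [show (1:ℝ) = Real.exp 0 by simp]
      exact Real.exp_le_exp.mpr (by linarith)
    have h2 : (0:ℝ) < Real.exp (2*z) + 1 := by positivity
    apply div_nonneg (by linarith) h2.le
  have htanh : Real.tanh z = y := by
    have h1 : Real.tanh z = Real.sqrt (Real.tanh z ^ 2) := (Real.sqrt_sq htanh0).symm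
    rw [h1, htanhsq, hydef]
  have hzeq : z = artanh y := eq_artanh hylt htanh
  have hketa : k * (1 - α) = eta β := by
    rw [eta, ← hydef, ← hzeq, hzdef]
    field_simp
  have hlameq : lam = Lam α β := by
    rw [Lam, ← hketa]
    have hz2 : ((1:ℝ) - α) ^ (-2 : ℤ) = 1 / ((1 - α)^2) := by
      rw [zpow_neg, one_div]
      norm_cast
    rw [hz2]
    have : Real.exp (-β) * k ^ 2 = lam := by
      rw [hk2, ← mul_assoc]
      rw [mul_comm (Real.exp (-β)) lam, mul_assoc, ← Real.exp_add]
      simp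
    field_simp
    nlinarith [this]
  refine ⟨hlameq, ?_⟩
  intro x hx
  have hux : u x = u |x| := by
    rcases le_or_gt 0 x with h | h
    · rw [abs_of_nonneg h]
    · rw [abs_of_neg h]; exact (heven x).symm
  have habs1 : |x| ≤ 1 := abs_le.mpr ⟨hx.1, hx.2⟩
  rcases lt_or_ge |x| α with h | h
  · rw [U]
    simp only [h, if_pos]
    rw [hux]
    rcases eq_or_lt_of_le (abs_nonneg x) with h0 | h0
    · rw [← h0, hu0]
    · rw [hu_midc |x| ⟨by linarith, h⟩, hu0]
  · rw [U]
    have hnot : ¬ |x| < α := not_lt.mpr h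
    simp only [hnot, if_neg, if_false]
    rw [hux, huni |x| ⟨h, habs1⟩, gsol]
    congr 2
    rw [← hketa]
    field_simp
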